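/- Assume condition (PC) and the existence of e ∈ ℰ, ε > 0 with e(x) ⪰ εI_q on 𝒳. Let Λ be a moment functional, x₀ ∈ 𝒳, and M a positive semidefinite matrix with tr(F(x₀)M) ≤ Λ(F) for all F ∈ ℰ_⪰. Suppose M is maximal for this property: whenever M' ⪰ M and tr(F(x₀)M') ≤ Λ(F) for all F ∈ ℰ_⪰, then M' = M. Then M is the mass at x₀ of some representing measure of Λ. -/

import Mathlib

open Matrix
open scoped ComplexOrder

variable {X : Type*} {q : ℕ}

/-- `μ` is a (finitely atomic) representing measure of the linear functional `Λ`. -/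
def IsRepMeasure (E : Submodule ℝ (X → Matrix (Fin q) (Fin q) ℂ)) (Λ : E →ₗ[ℝ] ℝ)
    (μ : X →₀ Matrix (Fin q) (Fin q) ℂ) : Prop :=
  (∀ x, (μ x).PosSemidef) ∧
    ∀ F : E, Λ F = μ.sum fun x M => (((F : X → Matrix (Fin q) (Fin q) ℂ) x) * M).trace.re

lemma psd_diag_nonneg {n : ℕ} {P : Matrix (Fin n) (Fin n) ℂ} (hP : P.PosSemidef) (i : Fin n) :
    0 ≤ P i i := by
  exact hP.diag_nonneg

lemma psd_trace_nonneg {n : ℕ} {P : Matrix (Fin n) (Fin n) ℂ} (hP : P.PosSemidef) :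
    0 ≤ P.trace := by
  exact Finset.sum_nonneg fun i _ => psd_diag_nonneg hP i

lemma trace_mul_psd_nonneg {n : ℕ} {A B : Matrix (Fin n) (Fin n) ℂ}
    (hA : A.PosSemidef) (hB : B.PosSemidef) : 0 ≤ (A * B).trace.re := by
  obtain ⟨C, rfl⟩ : ∃ C : Matrix (Fin n) (Fin n) ℂ, B = Cᴴ * C := by
    open scoped MatrixOrder Matrix.Norms.L2Operator in
    obtain ⟨C, hC⟩ := CStarAlgebra.nonneg_iff_eq_star_mul_self.mp hB.nonneg
    exact ⟨C, hC⟩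
  have h1 : (A * (Cᴴ * C)).trace = (C * A * Cᴴ).trace := by
    rw [← Matrix.mul_assoc, Matrix.trace_mul_cycle]
  have h2 : (0 : ℂ) ≤ (C * A * Cᴴ).trace :=
    psd_trace_nonneg (hA.mul_mul_conjTranspose_same C)
  rw [h1]
  exact (Complex.le_def.mp h2).1

/-- Assume condition (PC) and the existence of `e ∈ ℰ`, `ε > 0` with `e(x) ⪰ ε I` on `𝒳`.
Let `Λ` be a moment functional, `x₀ ∈ 𝒳`, and `M ⪰ 0` with `tr(F(x₀) M) ≤ Λ(F)` for all
`F ∈ ℰ_⪰`, and suppose `M` is maximal for this property.  Then `M` is the mass at `x₀` of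
some representing measure of `Λ`. -/
theorem maximal_mass_attained (E : Submodule ℝ (X → Matrix (Fin q) (Fin q) ℂ))
    (hfin : FiniteDimensional ℝ E)
    (hherm : ∀ F ∈ E, ∀ x, Matrix.IsHermitian (F x))
    (hPC : ∀ Λ' : E →ₗ[ℝ] ℝ,
      (∀ F : E, (∀ x, ((F : X → Matrix (Fin q) (Fin q) ℂ) x).PosSemidef) → 0 ≤ Λ' F) →
      ∃ μ, IsRepMeasure E Λ' μ)
    (e : E) (ε : ℝ) (hε : 0 < ε)
    (he : ∀ x, (((e : X → Matrix (Fin q) (Fin q) ℂ) x) - ε • (1 : Matrix (Fin q) (Fin q) ℂ)).PosSemidef)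
    (Λ : E →ₗ[ℝ] ℝ) (hΛ : ∃ μ, IsRepMeasure E Λ μ) (x₀ : X)
    (M : Matrix (Fin q) (Fin q) ℂ) (hM : M.PosSemidef)
    (hMdom : ∀ F : E, (∀ x, ((F : X → Matrix (Fin q) (Fin q) ℂ) x).PosSemidef) →
      (((F : X → Matrix (Fin q) (Fin q) ℂ) x₀) * M).trace.re ≤ Λ F)
    (hMmax : ∀ M' : Matrix (Fin q) (Fin q) ℂ, M'.PosSemidef → (M' - M).PosSemidef →
      (∀ F : E, (∀ x, ((F : X → Matrix (Fin q) (Fin q) ℂ) x).PosSemidef) →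
        (((F : X → Matrix (Fin q) (Fin q) ℂ) x₀) * M').trace.re ≤ Λ F) → M' = M) :
    ∃ μ, IsRepMeasure E Λ μ ∧ μ x₀ = M := by
  classical
  -- the functional F ↦ tr(F(x₀) M).re
  set T : E →ₗ[ℝ] ℝ :=
    { toFun := fun F => (((F : X → Matrix (Fin q) (Fin q) ℂ) x₀) * M).trace.re
      map_add' := by
        intro F G
        simp [Matrix.add_mul, Matrix.trace_add]
      map_smul' := by
        intro c F
        simp [Matrix.smul_mul, Complex.smul_re] } with hT
  set Λ' : E →ₗ[ℝ] ℝ := Λ - T with hΛ'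
  have hΛ'pos : ∀ F : E, (∀ x, ((F : X → Matrix (Fin q) (Fin q) ℂ) x).PosSemidef) → 0 ≤ Λ' F := by
    intro F hF
    have := hMdom F hF
    simp only [hΛ', LinearMap.sub_apply, hT, LinearMap.coe_mk, AddHom.coe_mk]
    linarith
  obtain ⟨ν, hν1, hν2⟩ := hPC Λ' hΛ'pos
  set μ : X →₀ Matrix (Fin q) (Fin q) ℂ := ν + Finsupp.single x₀ M with hμ
  have hμx : ∀ x, μ x = ν x + (Finsupp.single x₀ M) x := fun x => rfl
  have hμpsd : ∀ x, (μ x).PosSemidef := by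
    intro x
    rw [hμx]
    rcases eq_or_ne x₀ x with rfl | h
    · simpa [Finsupp.single_eq_same] using (hν1 x₀).add hM
    · simpa [Finsupp.single_eq_of_ne' h] using (hν1 x)
  have hμrep : ∀ F : E,
      Λ F = μ.sum fun x N => (((F : X → Matrix (Fin q) (Fin q) ℂ) x) * N).trace.re := by
    intro F
    have hadd : (μ.sum fun x N => (((F : X → Matrix (Fin q) (Fin q) ℂ) x) * N).trace.re) =
        (ν.sum fun x N => (((F : X → Matrix (Fin q) (Fin q) ℂ) x) * N).trace.re) +
        ((Finsupp.single x₀ M).sum fun x N =>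
          (((F : X → Matrix (Fin q) (Fin q) ℂ) x) * N).trace.re) := by
      rw [hμ]
      refine Finsupp.sum_add_index' (fun x => by simp) ?_
      intro x N₁ N₂
      simp [Matrix.mul_add, Matrix.trace_add]
    rw [hadd, Finsupp.sum_single_index (by simp), ← hν2 F]
    simp only [hΛ', LinearMap.sub_apply, hT, LinearMap.coe_mk, AddHom.coe_mk]
    ring
  refine ⟨μ, ⟨hμpsd, hμrep⟩, ?_⟩
  -- μ x₀ = ν x₀ + M, and maximality forces ν x₀ + M = M
  have key : ν x₀ + M = M := by
    apply hMmax
    · have h := hμpsd x₀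
      rwa [hμx, Finsupp.single_eq_same] at h
    · simpa using hν1 x₀
    · intro F hF
      have hterm : (((F : X → Matrix (Fin q) (Fin q) ℂ) x₀) * ν x₀).trace.re ≤ Λ' F := by
        rw [hν2 F]
        by_cases hx : x₀ ∈ ν.support
        · refine Finset.single_le_sum (f := fun x =>
            (((F : X → Matrix (Fin q) (Fin q) ℂ) x) * ν x).trace.re) ?_ hx
          intro i _
          exact trace_mul_psd_nonneg (hF i) (hν1 i)
        · have : ν x₀ = 0 := Finsupp.notMem_support_iff.mp hx
          rw [this]
          simp only [Matrix.mul_zero, Matrix.trace_zero, Complex.zero_re]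
          exact Finset.sum_nonneg fun i _ => trace_mul_psd_nonneg (hF i) (hν1 i)
      have h2 : Λ' F = Λ F - (((F : X → Matrix (Fin q) (Fin q) ℂ) x₀) * M).trace.re := by
        simp [hΛ', hT]
      rw [Matrix.mul_add, Matrix.trace_add]
      simp only [Complex.add_re]
      linarith [hterm, h2 ▸ hterm]
    
  calc μ x₀ = ν x₀ + M := by rw [hμx, Finsupp.single_eq_same]
  _ = M := key
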